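/- arXiv:1808.05091 — 2 statements merged into one kernel-verified Lean document; each statement's English description precedes it below -/
import Mathlib

section
/- The function \psi(t) = Q(t) - t = (3t + 2(1-t)^{3/2} - t^3 - 2)/t^2 is strictly decreasing on (0,1). -/
open Real

lemma g_mono {u v : ℝ} (hv : 0 ≤ v) (huv : v < u) :
    v ^ 3 * (v + 2) / (1 + v) ^ 2 < u ^ 3 * (u + 2) / (1 + u) ^ 2 := by
  have h0 : (0:ℝ) < u := lt_of_le_of_lt hv huv
  rw [div_lt_div_iff₀ (by positivity) (by positivity)]
  have key : u ^ 3 * (u + 2) * (1 + v) ^ 2 - v ^ 3 * (v + 2) * (1 + u) ^ 2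
      = (u - v) * ((u + v) * (u ^ 2 + v ^ 2) + 2 * (u * v) * (u ^ 2 + u * v + v ^ 2)
        + u ^ 2 * v ^ 2 * (u + v) + 2 * (u ^ 2 + u * v + v ^ 2) + 4 * (u * v) * (u + v)
        + 2 * u ^ 2 * v ^ 2) := by ring
  have hM : 0 < (u + v) * (u ^ 2 + v ^ 2) + 2 * (u * v) * (u ^ 2 + u * v + v ^ 2)
        + u ^ 2 * v ^ 2 * (u + v) + 2 * (u ^ 2 + u * v + v ^ 2) + 4 * (u * v) * (u + v)
        + 2 * u ^ 2 * v ^ 2 := by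
    have huv : 0 ≤ u * v := mul_nonneg h0.le hv
    nlinarith [mul_nonneg huv (add_nonneg h0.le hv), sq_nonneg u, sq_nonneg v,
      mul_nonneg huv huv, mul_nonneg (mul_nonneg huv huv) (add_nonneg h0.le hv),
      mul_nonneg huv (sq_nonneg u), mul_nonneg huv (sq_nonneg v),
      mul_nonneg (mul_nonneg h0.le hv) (mul_nonneg h0.le hv)]
  nlinarith [mul_pos (sub_pos.mpr huv) hM]

lemma psi_eq {t : ℝ} (ht : t ∈ Set.Ioo (0:ℝ) 1) :
    (3 * t + 2 * Real.sqrt ((1 - t) ^ 3) - t ^ 3 - 2) / t ^ 2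
      = (Real.sqrt (1 - t)) ^ 3 * (Real.sqrt (1 - t) + 2) / (1 + Real.sqrt (1 - t)) ^ 2 := by
  obtain ⟨ht0, ht1⟩ := ht
  set u := Real.sqrt (1 - t) with hu
  have h1t : (0:ℝ) ≤ 1 - t := by linarith
  have hu0 : 0 ≤ u := Real.sqrt_nonneg _
  have hu2 : u ^ 2 = 1 - t := Real.sq_sqrt h1t
  have hu1 : u < 1 := by
    nlinarith [hu2]
  have hs : Real.sqrt ((1 - t) ^ 3) = u ^ 3 := by
    rw [show (1 - t) ^ 3 = (u ^ 3) ^ 2 by rw [← hu2]; ring]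
    exact Real.sqrt_sq (by positivity)
  rw [hs]
  have ht' : t = 1 - u ^ 2 := by linarith
  rw [ht']
  have h1 : 1 - u ^ 2 ≠ 0 := by nlinarith
  have h2 : (1 : ℝ) + u ≠ 0 := by positivity
  field_simp
  ring

theorem psi_strictAntiOn :
    StrictAntiOn (fun t : ℝ => (3 * t + 2 * Real.sqrt ((1 - t) ^ 3) - t ^ 3 - 2) / t ^ 2)
      (Set.Ioo 0 1) := by
  intro a ha b hb hab
  simp only
  rw [psi_eq ha, psi_eq hb]
  apply g_mono (Real.sqrt_nonneg _)
  apply Real.sqrt_lt_sqrt (by linarith [hb.2])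
  linarith
end

section
/- For all real x \geq 4, x - 2y_1 + z_2 < 0, where y_1 = x + \pi^2/(2x) - \pi^4/(8x^3) + \pi^6/(16x^5) - 5\pi^8/(128x^7) + 7\pi^{10}/(256x^9) - 21\pi^{12}/(1024x^{11}) and z_2 = x + \pi^2/x - \pi^4/(2x^3) + \pi^6/(2x^5) - 5\pi^8/(8x^7) + 7\pi^{10}/(8x^9). -/
open Real

theorem x_sub_two_y1_add_z2_neg (x : ℝ) (hx : 4 ≤ x) :
    x - 2 * (x + π ^ 2 / (2 * x) - π ^ 4 / (8 * x ^ 3) + π ^ 6 / (16 * x ^ 5)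
        - 5 * π ^ 8 / (128 * x ^ 7) + 7 * π ^ 10 / (256 * x ^ 9)
        - 21 * π ^ 12 / (1024 * x ^ 11))
      + (x + π ^ 2 / x - π ^ 4 / (2 * x ^ 3) + π ^ 6 / (2 * x ^ 5)
        - 5 * π ^ 8 / (8 * x ^ 7) + 7 * π ^ 10 / (8 * x ^ 9)) < 0 := by
  have hx0 : (0:ℝ) < x := by linarith
  have key : x - 2 * (x + π ^ 2 / (2 * x) - π ^ 4 / (8 * x ^ 3) + π ^ 6 / (16 * x ^ 5)
        - 5 * π ^ 8 / (128 * x ^ 7) + 7 * π ^ 10 / (256 * x ^ 9)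
        - 21 * π ^ 12 / (1024 * x ^ 11))
      + (x + π ^ 2 / x - π ^ 4 / (2 * x ^ 3) + π ^ 6 / (2 * x ^ 5)
        - 5 * π ^ 8 / (8 * x ^ 7) + 7 * π ^ 10 / (8 * x ^ 9))
      = -(π ^ 4 * (128 * x ^ 8 - 192 * π ^ 2 * x ^ 6 + 280 * π ^ 4 * x ^ 4
          - 420 * π ^ 6 * x ^ 2 - 21 * π ^ 8)) / (512 * x ^ 11) := by
    field_simp
    ring
  rw [key]
  have hpi1 : 3.141592 < π := pi_gt_d6
  have hpi2 : π < 3.15 := by have := pi_lt_d2; linarith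
  have hp_u : π ^ 2 < 9.93 := by nlinarith
  have hp_l : 9.86 < π ^ 2 := by nlinarith
  have hp4_u : π ^ 4 < 98.61 := by nlinarith
  have hp4_l : 97.2 < π ^ 4 := by nlinarith
  have hp6_u : π ^ 6 < 979.2 := by nlinarith
  have hp8_u : π ^ 8 < 9723 := by nlinarith
  have h2 : (16:ℝ) ≤ x ^ 2 := by nlinarith
  have h4 : 16 * x ^ 2 ≤ x ^ 4 := by
    calc 16 * x ^ 2 ≤ x ^ 2 * x ^ 2 := mul_le_mul_of_nonneg_right h2 (sq_nonneg x)
      _ = x ^ 4 := by ring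
  have h6 : 16 * x ^ 4 ≤ x ^ 6 := by
    calc 16 * x ^ 4 ≤ x ^ 2 * x ^ 4 := mul_le_mul_of_nonneg_right h2 (by positivity)
      _ = x ^ 6 := by ring
  have h8 : 16 * x ^ 6 ≤ x ^ 8 := by
    calc 16 * x ^ 6 ≤ x ^ 2 * x ^ 6 := mul_le_mul_of_nonneg_right h2 (by positivity)
      _ = x ^ 8 := by ring
  have b1 : π ^ 2 * x ^ 6 ≤ 9.93 * x ^ 6 :=
    mul_le_mul_of_nonneg_right hp_u.le (by positivity)
  have b2 : 97.2 * x ^ 4 ≤ π ^ 4 * x ^ 4 :=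
    mul_le_mul_of_nonneg_right hp4_l.le (by positivity)
  have b3 : π ^ 6 * x ^ 2 ≤ 979.2 * x ^ 2 :=
    mul_le_mul_of_nonneg_right hp6_u.le (by positivity)
  have hnum : 0 < 128 * x ^ 8 - 192 * π ^ 2 * x ^ 6 + 280 * π ^ 4 * x ^ 4
      - 420 * π ^ 6 * x ^ 2 - 21 * π ^ 8 := by linarith
  have hpos : 0 < π ^ 4 * (128 * x ^ 8 - 192 * π ^ 2 * x ^ 6 + 280 * π ^ 4 * x ^ 4
      - 420 * π ^ 6 * x ^ 2 - 21 * π ^ 8) := by positivity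
  have hden : (0:ℝ) < 512 * x ^ 11 := by positivity
  have := div_pos hpos hden
  rw [neg_div]
  linarith
end
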